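/- arXiv:1701.05430 — 4 statements merged into one kernel-verified Lean document; each statement's English description precedes it below -/
import Mathlib

section
/- Let K/k be a purely inseparable extension of characteristic p > 0 that is both modular and lq-finite. Then K/k is q-finite, i.e., di(K/k) is finite. -/
/-!
Common definitions: purely inseparable extension theory (r-bases, degree of
irrationality, relative perfect closure, modularity), following Fliouet,
"Extensions absolument lq-finies".
-/

open IntermediateField

noncomputable section

/-- `k(K^p)`: the intermediate field of `K/k` generated by the `p`-th powers of `K`. -/
def pClosure (k K : Type*) [Field k] [Field K] [Algebra k K] (p : ℕ) : IntermediateField k K :=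
  adjoin k {x : K | ∃ y : K, y ^ p = x}

/-- `k(K^{p^n})`. -/
def pnClosure (k K : Type*) [Field k] [Field K] [Algebra k K] (p n : ℕ) : IntermediateField k K :=
  adjoin k {x : K | ∃ y : K, y ^ p ^ n = x}

/-- `k(L^p)` for an intermediate field `L` of `Ω/k`. -/
def pClosureOf {k Ω : Type*} [Field k] [Field Ω] [Algebra k Ω] (p : ℕ)
    (L : IntermediateField k Ω) : IntermediateField k Ω :=
  adjoin k {x : Ω | ∃ y ∈ L, y ^ p = x}

/-- `B` is `r`-free over the intermediate field `L` (typically `L = k(K^p)`):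
no `x ∈ B` belongs to `L(B \ {x})`. -/
def RFreeOver {k K : Type*} [Field k] [Field K] [Algebra k K]
    (L : IntermediateField k K) (B : Set K) : Prop :=
  ∀ x ∈ B, x ∉ adjoin L (B \ {x})

/-- `B` is an `r`-basis of `K/k` : `K = k(K^p)(B)` and `B` is `r`-free over `k(K^p)`. -/
def RBasis (k K : Type*) [Field k] [Field K] [Algebra k K] (p : ℕ) (B : Set K) : Prop :=
  adjoin (pClosure k K p) B = ⊤ ∧ RFreeOver (pClosure k K p) B

/-- `B` is an `r`-basis of `L/F` where `F ≤ L` are intermediate fields of `Ω/k`: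
`L = F(L^p)(B)` and no `x ∈ B` lies in `F(L^p)(B \ {x})`. -/
def RBasisRel {k Ω : Type*} [Field k] [Field Ω] [Algebra k Ω] (p : ℕ)
    (F L : IntermediateField k Ω) (B : Set Ω) : Prop :=
  B ⊆ (L : Set Ω) ∧ F ⊔ pClosureOf p L ⊔ adjoin k B = L ∧
    ∀ x ∈ B, x ∉ F ⊔ pClosureOf p L ⊔ adjoin k (B \ {x})

/-- The degree of irrationality of a bounded-exponent extension:
the cardinality of an `r`-basis of `K/k`. -/
def diCard (k K : Type*) [Field k] [Field K] [Algebra k K] (p : ℕ) : Cardinal :=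
  sInf {c : Cardinal | ∃ B : Set K, RBasis k K p B ∧ Cardinal.mk B = c}

/-- `k^{p^{-n}} ∩ K = {x ∈ K | x^{p^n} ∈ k}`. -/
def expleq (k K : Type*) [Field k] [Field K] [Algebra k K] (p n : ℕ) : IntermediateField k K :=
  adjoin k {x : K | x ^ p ^ n ∈ (algebraMap k K).range}

/-- The degree of irrationality `di(K/k) = sup_n di(k^{p^{-n}} ∩ K / k)`. -/
def di (k K : Type*) [Field k] [Field K] [Algebra k K] (p : ℕ) : Cardinal :=
  ⨆ n : ℕ, diCard k (expleq k K p n) p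

/-- The relative perfect closure `rp(K/k)`: the largest intermediate field `L`
with `k(L^p) = L`. -/
def rp (k K : Type*) [Field k] [Field K] [Algebra k K] (p : ℕ) : IntermediateField k K :=
  sSup {L : IntermediateField k K | pClosureOf p L = L}

/-- `K/k` has unbounded exponent. -/
def UnboundedExp (k K : Type*) [Field k] [Field K] [Algebra k K] (p : ℕ) : Prop :=
  ∀ e : ℕ, ∃ x : K, x ^ p ^ e ∉ (algebraMap k K).range

/-- `K^{p^n}` as a subfield of `K`. -/
def pnPowers (K : Type*) [Field K] (p n : ℕ) : Subfield K :=
  Subfield.closure {x : K | ∃ y : K, y ^ p ^ n = x}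

/-- `K/k` is modular: for each `n`, `K^{p^n}` and `k` are linearly disjoint over
`K^{p^n} ∩ k`, i.e. every finite family of elements of `K^{p^n}` that is linearly
independent over `K^{p^n} ∩ k` remains linearly independent over `k`. -/
def Modular (k K : Type*) [Field k] [Field K] [Algebra k K] (p : ℕ) : Prop :=
  ∀ n : ℕ, ∀ s : Finset K, (↑s : Set K) ⊆ (pnPowers K p n : Set K) →
    LinearIndependent ↥(pnPowers K p n ⊓ (algebraMap k K).fieldRange)
      (fun x : s => (x : K)) →
    LinearIndependent ↥((algebraMap k K).fieldRange) (fun x : s => (x : K))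

/-- The exponent `o(a, F)` of `a` over an intermediate field `F`:
the least `m` with `a^{p^m} ∈ F`. -/
def expOf {k K : Type*} [Field k] [Field K] [Algebra k K] (p : ℕ)
    (F : IntermediateField k K) (a : K) : ℕ :=
  sInf {m : ℕ | a ^ p ^ m ∈ F}

/-- An intermediate field `L` of `K/k` is equiexponential of exponent `e` over `k`:
there is an `r`-basis `G` of `L/k` with `o(a, k(G \ {a})) = o(a, k) = e` for all `a ∈ G`. -/
def EquiExpOf {k K : Type*} [Field k] [Field K] [Algebra k K] (p : ℕ)
    (e : ℕ) (L : IntermediateField k K) : Prop :=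
  ∃ G : Set K, RBasisRel p ⊥ L G ∧
    ∀ a ∈ G, expOf p (adjoin k (G \ {a})) a = e ∧ expOf p (⊥ : IntermediateField k K) a = e

end


section Aux

set_option maxHeartbeats 1600000

open IntermediateField

variable {k K : Type*} [Field k] [Field K] [Algebra k K] (p : ℕ) [Fact p.Prime] [CharP k p]

private noncomputable def expleqIF (n : ℕ) : IntermediateField k K where
  carrier := {x : K | x ^ p ^ n ∈ (algebraMap k K).range}
  mul_mem' := by
    rintro a b ⟨x, hx⟩ ⟨y, hy⟩
    exact ⟨x * y, by rw [map_mul, hx, hy, mul_pow]⟩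
  one_mem' := ⟨1, by rw [map_one, one_pow]⟩
  add_mem' := by
    haveI : CharP K p := charP_of_injective_algebraMap (algebraMap k K).injective p
    rintro a b ⟨x, hx⟩ ⟨y, hy⟩
    exact ⟨x + y, by rw [map_add, hx, hy, add_pow_char_pow]⟩
  zero_mem' := ⟨0, by rw [map_zero, zero_pow (pow_ne_zero _ (Fact.out (p := p.Prime)).ne_zero)]⟩
  algebraMap_mem' := fun a => ⟨a ^ p ^ n, by rw [map_pow]⟩
  inv_mem' := by
    rintro a ⟨x, hx⟩
    exact ⟨x⁻¹, by rw [map_inv₀, hx, inv_pow]⟩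

private theorem mem_expleq {n : ℕ} {x : K} :
    x ∈ expleq k K p n ↔ x ^ p ^ n ∈ (algebraMap k K).range := by
  have h : expleq k K p n = expleqIF (k := k) (K := K) p n := by
    apply le_antisymm
    · exact adjoin_le_iff.2 (fun y hy => hy)
    · intro y hy
      exact subset_adjoin k _ hy
  rw [h]; rfl

private theorem exists_pow_eq_of_mem_pnPowers' [CharP K p] {x : K}
    (hx : x ∈ pnPowers K p 1) : ∃ y : K, y ^ p = x := by
  haveI : ExpChar K p := ExpChar.prime Fact.out
  have hset : {x : K | ∃ y : K, y ^ p ^ 1 = x} = ((frobenius K p).fieldRange : Set K) := by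
    ext z
    simp [RingHom.mem_fieldRange, frobenius_def, pow_one]
  have h : pnPowers K p 1 = (frobenius K p).fieldRange := by
    unfold pnPowers
    rw [hset, Subfield.closure_eq]
  rw [h, RingHom.mem_fieldRange] at hx
  obtain ⟨y, hy⟩ := hx
  exact ⟨y, by rw [← hy, frobenius_def]⟩

private theorem free_card_le' {F L : Type*} [Field F] [Field L] [Algebra F L]
    [FiniteDimensional F L]
    (B : Finset L) (hfree : ∀ x ∈ B, x ∉ adjoin F ((B : Set L) \ {x})) :
    B.card ≤ Module.finrank F L := by
  classical
  set l := B.toList with hl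
  have hlen : l.length = B.card := B.length_toList
  have hnd : l.Nodup := B.nodup_toList
  set g : ℕ → Submodule F L :=
    fun i => Subalgebra.toSubmodule (adjoin F {y | y ∈ l.take i}).toSubalgebra with hg
  have hmemg : ∀ i (z : L), z ∈ g i ↔ z ∈ adjoin F {y | y ∈ l.take i} := fun _ _ => Iff.rfl
  have claim1 : ∀ i, i < B.card → g i < g (i + 1) := by
    intro i hi
    have hi' : i < l.length := by omega
    set x := l.get ⟨i, hi'⟩ with hx
    have hxB : x ∈ B := by
      rw [← Finset.mem_toList]; exact List.get_mem _ _
    have hxtake : x ∈ l.take (i + 1) := by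
      refine List.mem_take_iff_getElem.mpr ⟨i, ?_, rfl⟩
      simp
      omega
    have hsub : {y | y ∈ l.take i} ⊆ (B : Set L) \ {x} := by
      intro y hy
      obtain ⟨j, hj, hjy⟩ := List.mem_take_iff_getElem.mp hy
      constructor
      · rw [← hjy]; rw [Finset.mem_coe, ← Finset.mem_toList]; exact List.getElem_mem _
      · intro hyx
        have h1 : l[j] = l[i] := by rw [hjy]; exact hyx
        have h2 := (List.Nodup.getElem_inj_iff hnd).mp h1
        omega
    have hxnot : x ∉ g i := by
      rw [hmemg]
      intro hmem
      exact hfree x hxB (adjoin.mono F _ _ hsub hmem)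
    have htt : {y : L | y ∈ l.take i} ⊆ {y : L | y ∈ l.take (i+1)} := by
      intro y hy
      obtain ⟨j, hj, rfl⟩ := List.mem_take_iff_getElem.mp hy
      refine List.mem_take_iff_getElem.mpr ⟨j, ?_, rfl⟩
      simp at hj ⊢
      omega
    have hle : g i ≤ g (i + 1) := by
      intro z hz
      rw [hmemg] at hz ⊢
      exact adjoin.mono F {y | y ∈ l.take i} {y | y ∈ l.take (i+1)} htt hz
    refine lt_of_le_of_ne hle ?_
    intro heq
    apply hxnot
    rw [heq, hmemg]
    exact subset_adjoin F _ hxtake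
  have claim2 : ∀ i, i ≤ B.card → i ≤ Module.finrank F (g i) := by
    intro i
    induction i with
    | zero => intro _; exact Nat.zero_le _
    | succ j ih =>
      intro hj
      have h1 := ih (by omega)
      have h2 := Submodule.finrank_lt_finrank_of_lt (claim1 j (by omega))
      omega
  have hc := claim2 B.card le_rfl
  have hfin := Submodule.finrank_le (g B.card)
  omega

private theorem diCard_le_finrank' (k L : Type*) [Field k] [Field L] [Algebra k L]
    [FiniteDimensional k L] (p : ℕ) :
    diCard k L p ≤ (Module.finrank ↥(pClosure k L p) L : Cardinal) := by
  classical
  set E := pClosure k L p with hE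
  haveI : FiniteDimensional ↥E L := FiniteDimensional.right k ↥E L
  have hex : ∃ m, ∃ B : Finset L, B.card = m ∧ adjoin ↥E (↑B : Set L) = ⊤ := by
    set b := Module.finBasis ↥E L with hb
    refine ⟨_, Finset.univ.image b, rfl, ?_⟩
    rw [eq_top_iff]
    intro x _
    have hx : x ∈ Submodule.span ↥E (Set.range b) := by rw [b.span_eq]; trivial
    have hsub : Set.range b ⊆
        (Subalgebra.toSubmodule (adjoin ↥E (↑(Finset.univ.image b) : Set L)).toSubalgebra :
          Set L) := by
      rintro y ⟨i, rfl⟩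
      exact subset_adjoin ↥E _ (by simp)
    exact Submodule.span_le.mpr hsub hx
  obtain ⟨B, hcard, hgen⟩ := Nat.find_spec hex
  have hfree : ∀ x ∈ B, x ∉ adjoin ↥E ((↑B : Set L) \ {x}) := by
    intro x hxB hmem
    have hBsub : (↑B : Set L) ⊆ ↑(adjoin ↥E (↑(B.erase x) : Set L)) := by
      intro y hy
      by_cases hyx : y = x
      · subst hyx
        rw [Finset.coe_erase]
        exact hmem
      · rw [Finset.coe_erase]
        exact subset_adjoin ↥E _ ⟨hy, hyx⟩
    have htop : adjoin ↥E (↑(B.erase x) : Set L) = ⊤ := by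
      rw [eq_top_iff, ← hgen]
      exact adjoin_le_iff.mpr hBsub
    have hlt : (B.erase x).card < Nat.find hex := by
      rw [← hcard]
      exact Finset.card_erase_lt_of_mem hxB
    exact Nat.find_min hex hlt ⟨B.erase x, rfl, htop⟩
  have hRB : RBasis k L p (↑B : Set L) := ⟨hgen, hfree⟩
  have hmem : ((B.card : ℕ) : Cardinal) ∈
      {c : Cardinal | ∃ B' : Set L, RBasis k L p B' ∧ Cardinal.mk B' = c} :=
    ⟨↑B, hRB, Cardinal.mk_coe_finset⟩
  calc diCard k L p ≤ ((B.card : ℕ) : Cardinal) := csInf_le (OrderBot.bddBelow _) hmem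
    _ ≤ (Module.finrank ↥E L : Cardinal) := by
        exact_mod_cast Nat.cast_le.mpr (free_card_le' B hfree)

end Aux


section Core

set_option maxHeartbeats 3200000
set_option synthInstance.maxHeartbeats 1000000

open IntermediateField

variable (p : ℕ) [Fact p.Prime] (k L K : Type*) [Field k] [Field L] [Field K]
  [Algebra k L] [Algebra k K] [CharP k p] [FiniteDimensional k L]

private theorem core_bound₁ (hmod : Modular k K p) (ι : L →ₐ[k] K)
    (hroot : ∀ g : K, g ^ p ∈ (algebraMap k K).range → ∃ x : L, ι x = g) :
    Module.finrank ↥(pClosure k L p) L ≤ Module.finrank k ↥(expleq k L p 1) := by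
  classical
  haveI hKp : CharP K p := charP_of_injective_algebraMap (algebraMap k K).injective p
  haveI : ExpChar K p := ExpChar.prime Fact.out
  haveI : CharP L p := charP_of_injective_algebraMap (algebraMap k L).injective p
  haveI : ExpChar L p := ExpChar.prime Fact.out
  set E := pClosure k L p with hEdef
  set M₁ := expleq k L p 1 with hM1def
  haveI : FiniteDimensional ↥E L := FiniteDimensional.right k ↥E L
  haveI : FiniteDimensional ↥M₁ L := FiniteDimensional.right k ↥M₁ L
  haveI : FiniteDimensional k ↥E := FiniteDimensional.left k ↥E L
  haveI : FiniteDimensional k ↥M₁ := FiniteDimensional.left k ↥M₁ L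
  set D := Module.finrank ↥M₁ L with hD
  let b : Module.Basis (Fin D) ↥M₁ L := Module.finBasis ↥M₁ L
  have hιinj : Function.Injective ι := ι.toRingHom.injective
  set c : Fin D → L := fun i => (b i : L) ^ p with hc
  set c' : Fin D → K := fun i => (ι (b i)) ^ p with hc'
  have hcc : ∀ i, ι (c i) = c' i := fun i => by rw [hc, hc', map_pow]
  have hppos : p ≠ 0 := (Fact.out (p := p.Prime)).ne_zero
  have hfrobinj : ∀ x y : K, x ^ p = y ^ p → x = y := by
    intro x y hxy
    exact frobenius_inj K p (by rwa [frobenius_def, frobenius_def])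
  -- Step I : linear independence of c' over pnPowers K p 1 ⊓ k
  have hFind : LinearIndependent ↥(pnPowers K p 1 ⊓ (algebraMap k K).fieldRange) c' := by
    rw [Fintype.linearIndependent_iff]
    intro f hf
    have hdata : ∀ j : Fin D, ∃ m : ↥M₁, (ι (m : L)) ^ p = (f j : K) := by
      intro j
      have h1 : (f j : K) ∈ pnPowers K p 1 := (Subfield.mem_inf.mp (f j).2).1
      have h2 : (f j : K) ∈ (algebraMap k K).fieldRange := (Subfield.mem_inf.mp (f j).2).2
      obtain ⟨g, hg⟩ := exists_pow_eq_of_mem_pnPowers' p h1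
      obtain ⟨a, ha⟩ := RingHom.mem_fieldRange.mp h2
      obtain ⟨x, hx⟩ := hroot g (by rw [hg, ← ha]; exact ⟨a, rfl⟩)
      have hxM : x ∈ M₁ := by
        rw [hM1def, mem_expleq]
        refine ⟨a, ?_⟩
        apply hιinj
        rw [map_pow, hx, AlgHom.commutes, pow_one, hg, ha]
      exact ⟨⟨x, hxM⟩, by rw [hx, hg]⟩
    choose m hm using hdata
    set t : L := ∑ j, m j • (b j : L) with ht
    have hιt : (ι t) ^ p = 0 := by
      have h1 : ι t = ∑ j, (ι ((m j : L))) * ι (b j) := by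
        rw [ht, map_sum]
        refine Finset.sum_congr rfl ?_
        intro j _
        rw [Algebra.smul_def, IntermediateField.algebraMap_apply, map_mul]
      rw [h1, ← hf]
      rw [sum_pow_char]
      refine Finset.sum_congr rfl ?_
      intro j _
      rw [mul_pow, hm j, hc']
      rfl
    have ht0 : t = 0 := by
      apply hιinj
      rw [map_zero]
      exact pow_eq_zero_iff hppos |>.mp hιt
    have hm0 : ∀ j, m j = 0 := by
      have hbli := Fintype.linearIndependent_iff.mp b.linearIndependent
      exact hbli m (by rw [← ht, ht0])
    intro i
    apply Subtype.ext
    have h5 : (f i : K) = (ι ((m i : L))) ^ p := (hm i).symm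
    rw [h5, hm0 i]
    push_cast
    rw [map_zero, zero_pow hppos]
  -- transfer through hmod
  have hc'inj : Function.Injective c' := by
    intro i j hij
    apply b.injective
    apply hιinj
    exact hfrobinj _ _ hij
  set s : Finset K := Finset.univ.image c' with hs
  have hmemS : ∀ i, c' i ∈ s := fun i => Finset.mem_image.mpr ⟨i, Finset.mem_univ i, rfl⟩
  set toS : Fin D → {x // x ∈ s} := fun i => ⟨c' i, hmemS i⟩ with htoS
  have htoSinj : Function.Injective toS := by
    intro i j hij
    exact hc'inj (congrArg Subtype.val hij)
  have hfromS : ∀ x : {x // x ∈ s}, ∃ i : Fin D, c' i = (x : K) := by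
    intro x
    obtain ⟨i, _, hi⟩ := Finset.mem_image.mp x.2
    exact ⟨i, hi⟩
  choose fromS hfromSspec using hfromS
  have hfromSinj : Function.Injective fromS := by
    intro x y hxy
    apply Subtype.ext
    rw [← hfromSspec x, ← hfromSspec y, hxy]
  have hs_sub : (↑s : Set K) ⊆ (pnPowers K p 1 : Set K) := by
    intro x hx
    rw [Finset.coe_image] at hx
    obtain ⟨i, _, rfl⟩ := hx
    exact Subfield.subset_closure ⟨ι (b i), by rw [pow_one]⟩
  have hfam1 : LinearIndependent ↥(pnPowers K p 1 ⊓ (algebraMap k K).fieldRange)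
      (fun x : s => (x : K)) := by
    have hcomp := hFind.comp fromS hfromSinj
    have heq : (c' ∘ fromS) = (fun x : s => (x : K)) := funext fun x => hfromSspec x
    rwa [heq] at hcomp
  have h2 := hmod 1 s hs_sub hfam1
  have hfr : LinearIndependent ↥((algebraMap k K).fieldRange) c' := by
    have hcomp := h2.comp toS htoSinj
    have heq : ((fun x : s => (x : K)) ∘ toS) = c' := funext fun i => rfl
    rwa [heq] at hcomp
  -- Step II : over k
  have hk : LinearIndependent k c' := by
    rw [Fintype.linearIndependent_iff]
    intro a ha
    set A : Fin D → ↥((algebraMap k K).fieldRange) :=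
      fun i => ⟨algebraMap k K (a i), RingHom.mem_fieldRange.mpr ⟨a i, rfl⟩⟩ with hA
    have hsum : ∑ i, A i • c' i = 0 := by
      rw [← ha]
      refine Finset.sum_congr rfl ?_
      intro i _
      show (algebraMap k K (a i)) * c' i = a i • c' i
      rw [Algebra.smul_def]
    have hz := Fintype.linearIndependent_iff.mp hfr A hsum
    intro i
    have h0 : algebraMap k K (a i) = 0 := congrArg Subtype.val (hz i)
    exact (algebraMap k K).injective (by rw [h0, map_zero])
  -- Step III : down to L
  have hkc : LinearIndependent k c := by
    apply LinearIndependent.of_comp ι.toLinearMap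
    have heq : (⇑ι.toLinearMap ∘ c) = c' := funext fun i => hcc i
    rwa [heq]
  -- Step IV : into E
  have hcE : ∀ i, c i ∈ E := by
    intro i
    rw [hEdef]
    exact subset_adjoin k _ ⟨b i, rfl⟩
  set ch : Fin D → ↥E := fun i => ⟨c i, hcE i⟩ with hch
  have hkch : LinearIndependent k ch := by
    apply LinearIndependent.of_comp E.val.toLinearMap
    have heq : (⇑E.val.toLinearMap ∘ ch) = c := funext fun i => rfl
    rwa [heq]
  have hDA : D ≤ Module.finrank k ↥E := by
    have hcard := hkch.fintype_card_le_finrank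
    simpa using hcard
  -- arithmetic
  have hAB : Module.finrank k ↥E * Module.finrank ↥E L = Module.finrank k L :=
    Module.finrank_mul_finrank k ↥E L
  have hCD : Module.finrank k ↥M₁ * D = Module.finrank k L := by
    rw [hD]
    exact Module.finrank_mul_finrank k ↥M₁ L
  have hDpos : 0 < D := by
    rw [hD]
    exact Module.finrank_pos
  have h1 : Module.finrank ↥E L * D ≤ Module.finrank k ↥M₁ * D := by
    calc Module.finrank ↥E L * D ≤ Module.finrank ↥E L * Module.finrank k ↥E :=
          Nat.mul_le_mul_left _ hDA
      _ = Module.finrank k ↥E * Module.finrank ↥E L := Nat.mul_comm _ _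
      _ = Module.finrank k L := hAB
      _ = Module.finrank k ↥M₁ * D := hCD.symm
  exact Nat.le_of_mul_le_mul_right h1 hDpos

private theorem core_bound₂ [FiniteDimensional k ↥(expleq k K p 1)] (ι : L →ₐ[k] K) :
    Module.finrank k ↥(expleq k L p 1) ≤ Module.finrank k ↥(expleq k K p 1) := by
  classical
  have hιinj : Function.Injective ι := ι.toRingHom.injective
  have hmm : ∀ x : ↥(expleq k L p 1), ι (x : L) ∈ expleq k K p 1 := by
    intro x
    have hx := x.2
    rw [mem_expleq] at hx
    obtain ⟨a, ha⟩ := hx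
    rw [mem_expleq]
    refine ⟨a, ?_⟩
    rw [← map_pow, ← ha, AlgHom.commutes]
  set φ : ↥(expleq k L p 1) →ₗ[k] ↥(expleq k K p 1) :=
    { toFun := fun x => ⟨ι (x : L), hmm x⟩
      map_add' := by
        intro x y
        apply Subtype.ext
        show ι ((x : L) + (y : L)) = ι (x : L) + ι (y : L)
        rw [map_add]
      map_smul' := by
        intro a x
        apply Subtype.ext
        show ι (a • (x : L)) = a • ι (x : L)
        rw [map_smul] } with hφ
  have hφinj : Function.Injective φ := by
    intro x y hxy
    apply Subtype.ext
    apply hιinj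
    exact congrArg Subtype.val hxy
  exact LinearMap.finrank_le_finrank_of_injective hφinj

end Core

section Main

set_option maxHeartbeats 3200000
set_option synthInstance.maxHeartbeats 1000000

open IntermediateField

private theorem finrank_pClosure_le_self (k L : Type*) [Field k] [Field L] [Algebra k L]
    [FiniteDimensional k L] (p : ℕ) :
    Module.finrank ↥(pClosure k L p) L ≤ Module.finrank k L := by
  haveI : FiniteDimensional ↥(pClosure k L p) L := FiniteDimensional.right k _ _
  haveI : FiniteDimensional k ↥(pClosure k L p) := FiniteDimensional.left k _ L
  have hAB := Module.finrank_mul_finrank k ↥(pClosure k L p) L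
  have hApos : 0 < Module.finrank k ↥(pClosure k L p) := Module.finrank_pos
  nlinarith [hAB]

end Main

/-- A purely inseparable extension which is both modular and
`lq`-finite is `q`-finite. -/
theorem qFinite_of_modular_of_lqFinite
    (p : ℕ) [Fact p.Prime] (k K : Type*) [Field k] [Field K] [Algebra k K] [CharP k p]
    [IsPurelyInseparable k K]
    (hmod : Modular k K p)
    (hlq : ∀ n : ℕ, FiniteDimensional k ↥(expleq k K p n)) :
    di k K p < Cardinal.aleph0 := by
  classical
  haveI h1 := hlq 1
  have hbound : ∀ n : ℕ, diCard k ↥(expleq k K p n) p ≤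
      ((Module.finrank k ↥(expleq k K p 1) : ℕ) : Cardinal) := by
    intro n
    haveI := hlq n
    refine le_trans (diCard_le_finrank' k ↥(expleq k K p n) p) ?_
    rw [Nat.cast_le]
    match n with
    | 0 =>
      haveI := hlq 0
      have hEL := finrank_pClosure_le_self k ↥(expleq k K p 0) p
      have h0 : expleq k K p 0 = ⊥ := by
        apply le_antisymm
        · refine IntermediateField.adjoin_le_iff.mpr ?_
          intro x hx
          simp only [Set.mem_setOf_eq, pow_zero, pow_one] at hx
          rw [SetLike.mem_coe, IntermediateField.mem_bot]
          exact hx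
        · exact bot_le
      have h0r : Module.finrank k ↥(expleq k K p 0) = 1 := by
        rw [h0]
        exact IntermediateField.finrank_bot
      have hNpos : 0 < Module.finrank k ↥(expleq k K p 1) := Module.finrank_pos
      omega
    | (m + 1) =>
      haveI := hlq (m + 1)
      have hroot : ∀ g : K, g ^ p ∈ (algebraMap k K).range →
          ∃ x : ↥(expleq k K p (m + 1)), (expleq k K p (m + 1)).val x = g := by
        intro g hg
        obtain ⟨a, ha⟩ := hg
        have hgmem : g ∈ expleq k K p (m + 1) := by
          rw [mem_expleq]
          refine ⟨a ^ p ^ m, ?_⟩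
          rw [map_pow, ha, ← pow_mul, ← pow_succ']
        exact ⟨⟨g, hgmem⟩, rfl⟩
      have hb1 := core_bound₁ p k ↥(expleq k K p (m + 1)) K hmod
        (expleq k K p (m + 1)).val hroot
      have hb2 := core_bound₂ p k ↥(expleq k K p (m + 1)) K (expleq k K p (m + 1)).val
      exact le_trans hb1 hb2
  have hle : di k K p ≤ ((Module.finrank k ↥(expleq k K p 1) : ℕ) : Cardinal) := by
    unfold di
    exact ciSup_le hbound
  exact lt_of_le_of_lt hle (Cardinal.nat_lt_aleph0 _)
end

section
/- Let K/k be a purely inseparable extension of characteristic p > 0. The following are equivalent: (1) for every intermediate field L of K/k, the extension L/k(L^p) is finite; (2) every decreasing sequence of intermediate fields of K/k is eventually stationary. -/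
/-!
Common definitions: purely inseparable extension theory (r-bases, degree of
irrationality, relative perfect closure, modularity), following Fliouet,
"Extensions absolument lq-finies".
-/

open IntermediateField

section AuxLemmas
open Polynomial
set_option linter.unusedSectionVars false

variable {F L : Type*} [Field F] [Field L] [Algebra F L] {p : ℕ} [Fact p.Prime] [CharP L p]

private lemma aux_isIntegral {x : L} (hx : x ^ p ∈ (algebraMap F L).range) : IsIntegral F x := by
  obtain ⟨c, hc⟩ := hx
  refine ⟨X ^ p - C c, monic_X_pow_sub_C c (Fact.out : p.Prime).ne_zero, ?_⟩
  simp [hc]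

private lemma aux_finrank {x : L} (hx : x ^ p ∈ (algebraMap F L).range)
    (hxF : x ∉ (algebraMap F L).range) :
    Module.finrank F F⟮x⟯ = p := by
  obtain ⟨c, hc⟩ := hx
  have hirr : Irreducible (X ^ p - C c) := by
    apply X_pow_sub_C_irreducible_of_prime (Fact.out : p.Prime)
    intro b hb
    apply hxF
    have h1 : (algebraMap F L b - x) ^ p = 0 := by
      rw [sub_pow_char, ← map_pow, hb, hc, sub_self]
    exact ⟨b, by rwa [pow_eq_zero_iff (Fact.out : p.Prime).ne_zero, sub_eq_zero] at h1⟩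
  have hmin : minpoly F x = X ^ p - C c :=
    (minpoly.eq_of_irreducible_of_monic hirr (by simp [hc])
      (monic_X_pow_sub_C c (Fact.out : p.Prime).ne_zero)).symm
  rw [IntermediateField.adjoin.finrank (aux_isIntegral ⟨c, hc⟩), hmin, natDegree_X_pow_sub_C]

private lemma aux_exchange {x y : L} (hx : x ^ p ∈ (algebraMap F L).range)
    (hy : y ^ p ∈ (algebraMap F L).range) (hxF : x ∉ (algebraMap F L).range)
    (hxy : x ∈ F⟮y⟯) : y ∈ F⟮x⟯ := by
  have hyF : y ∉ (algebraMap F L).range := by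
    intro h
    apply hxF
    have hb : F⟮y⟯ ≤ ⊥ := by
      rw [adjoin_simple_le_iff]
      exact mem_bot.mpr h
    exact mem_bot.mp (hb hxy)
  haveI hfin : FiniteDimensional F F⟮y⟯ :=
    IntermediateField.adjoin.finiteDimensional (aux_isIntegral hy)
  have hle : F⟮x⟯ ≤ F⟮y⟯ := adjoin_simple_le_iff.mpr hxy
  have heq : F⟮x⟯ = F⟮y⟯ :=
    IntermediateField.eq_of_le_of_finrank_le hle
      (by rw [aux_finrank hx hxF, aux_finrank hy hyF])
  rw [heq]
  exact mem_adjoin_simple_self F y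

/-- In a chain of sets, any finite subset of the union lies in a member. -/
private lemma aux_chain_finset {α : Type*} {c : Set (Set α)} (hchain : IsChain (· ⊆ ·) c)
    (T : Finset α) (hT : (T : Set α) ⊆ ⋃₀ c) (hne : c.Nonempty) :
    ∃ B₀ ∈ c, (T : Set α) ⊆ B₀ := by
  classical
  induction T using Finset.induction with
  | empty => exact ⟨hne.choose, hne.choose_spec, by simp⟩
  | @insert a T ha ih =>
    obtain ⟨B₀, hB₀, hTB₀⟩ := ih (by
      intro t ht
      exact hT (by simp [ht]))
    have haU : a ∈ ⋃₀ c := hT (by simp)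
    obtain ⟨B₁, hB₁, haB₁⟩ := haU
    rcases hchain.total hB₀ hB₁ with h | h
    · exact ⟨B₁, hB₁, by
        intro t ht
        rcases Finset.mem_insert.mp (by exact_mod_cast ht) with rfl | ht'
        · exact haB₁
        · exact h (hTB₀ ht')⟩
    · exact ⟨B₀, hB₀, by
        intro t ht
        rcases Finset.mem_insert.mp (by exact_mod_cast ht) with rfl | ht'
        · exact h haB₁
        · exact hTB₀ ht'⟩

/-- If `L/F` has exponent ≤ 1 and is infinite, there is an infinite `p`-independent set. -/
private lemma exists_indep_set (hpow : ∀ x : L, x ^ p ∈ (algebraMap F L).range)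
    (hinf : ¬ FiniteDimensional F L) :
    ∃ B : Set L, B.Infinite ∧ ∀ x ∈ B, x ∉ adjoin F (B \ {x}) := by
  classical
  set 𝒮 : Set (Set L) := {B | ∀ x ∈ B, x ∉ adjoin F (B \ {x})} with h𝒮
  obtain ⟨B, hBmem, hBmax⟩ : ∃ B, B ∈ 𝒮 ∧ ∀ ⦃y⦄, y ∈ 𝒮 → B ⊆ y → y ⊆ B := by
    obtain ⟨B, hB⟩ := zorn_subset 𝒮 (by
      intro c hc hchain
      refine ⟨⋃₀ c, ?_, fun s hs => Set.subset_sUnion_of_mem hs⟩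
      intro x hx hmem
      obtain ⟨T, hTsub, hT⟩ := IntermediateField.exists_finset_of_mem_adjoin hmem
      obtain ⟨B₁, hB₁c, hxB₁⟩ := hx
      obtain ⟨B₀, hB₀c, hins⟩ := aux_chain_finset hchain (insert x T) (by
        intro t ht
        rcases Finset.mem_insert.mp (by exact_mod_cast ht) with rfl | ht'
        · exact ⟨B₁, hB₁c, hxB₁⟩
        · exact (hTsub ht').1) ⟨B₁, hB₁c⟩
      have hxB₀ : x ∈ B₀ := hins (by simp)
      have hTB₀ : (T : Set L) ⊆ B₀ \ {x} := by
        intro t ht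
        exact ⟨hins (by simp [ht]), (hTsub ht).2⟩
      exact (hc hB₀c) x hxB₀ ((IntermediateField.adjoin.mono F _ _ hTB₀) hT))
    exact ⟨B, hB.1, fun y hy hBy => hB.2 hy hBy⟩
  -- maximality gives adjoin F B = ⊤
  have htop : adjoin F B = (⊤ : IntermediateField F L) := by
    by_contra hne
    obtain ⟨y, hy⟩ : ∃ y : L, y ∉ adjoin F B := by
      by_contra h
      push_neg at h
      exact hne (eq_top_iff.mpr fun z _ => h z)
    have hyB : y ∉ B := fun h => hy (subset_adjoin F _ h)
    have hBin : insert y B ∈ 𝒮 := by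
      intro x hxmem hx
      rcases Set.mem_insert_iff.mp hxmem with rfl | hxB
      · apply hy
        rwa [Set.insert_diff_self_of_notMem hyB] at hx
      · have hxy : x ≠ y := fun h => hyB (h ▸ hxB)
        have hxnot : x ∉ adjoin F (B \ {x}) := hBmem x hxB
        have hset : insert y B \ {x} = (B \ {x}) ∪ {y} := by
          rw [Set.insert_diff_of_notMem _ (by simp [hxy.symm] : y ∉ ({x} : Set L)),
            Set.union_singleton]
        rw [hset] at hx
        rw [← IntermediateField.adjoin_adjoin_left F (B \ {x}) {y}] at hx
        have hx' : x ∈ adjoin ↥(adjoin F (B \ {x})) {y} := hx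
        obtain ⟨c, hc⟩ := hpow x
        have hxp' : x ^ p ∈ (algebraMap ↥(adjoin F (B \ {x})) L).range :=
          ⟨⟨x ^ p, by rw [← hc]; exact (adjoin F (B \ {x})).algebraMap_mem c⟩, rfl⟩
        obtain ⟨cy, hcy⟩ := hpow y
        have hyp' : y ^ p ∈ (algebraMap ↥(adjoin F (B \ {x})) L).range :=
          ⟨⟨y ^ p, by rw [← hcy]; exact (adjoin F (B \ {x})).algebraMap_mem cy⟩, rfl⟩
        have hxF' : x ∉ (algebraMap ↥(adjoin F (B \ {x})) L).range := by
          rintro ⟨⟨z, hz⟩, h⟩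
          have hzx : z = x := h
          exact hxnot (hzx ▸ hz)
        have h2 : y ∈ adjoin ↥(adjoin F (B \ {x})) {x} := aux_exchange hxp' hyp' hxF' hx'
        have h3 : y ∈ adjoin F ((B \ {x}) ∪ {x}) := by
          rw [← IntermediateField.adjoin_adjoin_left F (B \ {x}) {x}]
          exact h2
        rw [Set.diff_union_self, Set.union_singleton, Set.insert_eq_of_mem hxB] at h3
        exact hy h3
    exact hyB (hBmax hBin (Set.subset_insert y B) (Set.mem_insert y B))
  -- B is infinite
  have hBinf : B.Infinite := by
    intro hfin
    haveI : Finite ↥B := hfin.to_subtype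
    haveI : FiniteDimensional F (adjoin F B) :=
      IntermediateField.finiteDimensional_adjoin (fun x _ => aux_isIntegral (hpow x))
    rw [htop] at this
    exact hinf ((topEquiv (F := F) (E := L)).toLinearEquiv.finiteDimensional)
  exact ⟨B, hBinf, hBmem⟩

end AuxLemmas

set_option maxHeartbeats 4000000 in
set_option synthInstance.maxHeartbeats 1000000 in
/-- For a purely inseparable extension `K/k`, the following are
equivalent: (1) `L/k(L^p)` is finite for every intermediate field `L`;
(2) every decreasing sequence of intermediate fields of `K/k` is stationary. -/
theorem absolutely_lqFinite_iff_descending_stationary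
    (p : ℕ) [Fact p.Prime] (k K : Type*) [Field k] [Field K] [Algebra k K] [CharP k p]
    [IsPurelyInseparable k K] :
    (∀ L : IntermediateField k K, FiniteDimensional ↥(pClosure k ↥L p) ↥L) ↔
      (∀ f : ℕ → IntermediateField k K, (∀ n, f (n + 1) ≤ f n) →
        ∃ n₀ : ℕ, ∀ n ≥ n₀, f n = f n₀) := by
  have hp : p.Prime := Fact.out
  haveI : CharP K p := charP_of_injective_algebraMap (algebraMap k K).injective p
  haveI : ExpChar k p := ExpChar.prime hp
  constructor
  · -- (1) → (2) : the socle trick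
    intro hyp f hf
    have hanti : Antitone f := antitone_nat_of_succ_le hf
    set F : IntermediateField k K := ⨅ n, f n with hF
    have hFle : ∀ n, F ≤ f n := fun n => iInf_le f n
    have hmemF : ∀ x : K, (∀ n, x ∈ f n) → x ∈ F := by
      intro x hx
      have : x ∈ (↑(⨅ n, f n) : Set K) := by
        rw [IntermediateField.coe_iInf]
        exact Set.mem_iInter.mpr hx
      exact this
    -- the socle S = F^{p⁻¹} ∩ K
    set Ssub : Subfield K := Subfield.comap (frobenius K p) F.toSubfield with hSsub
    have halg : ∀ c : k, algebraMap k K c ∈ Ssub := by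
      intro c
      have h1 : (algebraMap k K c) ^ p ∈ F := pow_mem (F.algebraMap_mem c) p
      exact Subfield.mem_comap.mpr h1
    set S : IntermediateField k K := Ssub.toIntermediateField halg with hS
    have hSmem : ∀ x : K, x ∈ S ↔ x ^ p ∈ F := fun x => Iff.rfl
    haveI hfd : FiniteDimensional ↥(pClosure k ↥S p) ↥S := hyp S
    -- the p-th power closure of S maps into F
    have halg2 : ∀ c : k, algebraMap k ↥S c ∈ Subfield.comap (S.val : ↥S →+* K) F.toSubfield := by
      intro c
      apply Subfield.mem_comap.mpr
      show S.val (algebraMap k ↥S c) ∈ F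
      rw [S.val.commutes c]
      exact F.algebraMap_mem c
    set F' : IntermediateField k ↥S :=
      (Subfield.comap (S.val : ↥S →+* K) F.toSubfield).toIntermediateField halg2 with hF'
    have hle : pClosure k ↥S p ≤ F' := by
      show adjoin k {x : ↥S | ∃ y : ↥S, y ^ p = x} ≤ F'
      apply adjoin_le_iff.mpr
      rintro x ⟨y, rfl⟩
      show S.val (y ^ p) ∈ F
      rw [map_pow]
      exact (hSmem (S.val y)).mp y.2
    have hEF : ∀ c : ↥(pClosure k ↥S p), ((c : ↥S) : K) ∈ F := fun c => hle c.2
    -- the decreasing chain of submodules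
    let V : ℕ → Submodule ↥(pClosure k ↥S p) ↥S := fun n =>
      { carrier := {x : ↥S | (x : K) ∈ f n}
        add_mem' := fun {a b} ha hb => by
          show ((a + b : ↥S) : K) ∈ f n
          push_cast
          exact add_mem ha hb
        zero_mem' := by
          show ((0 : ↥S) : K) ∈ f n
          push_cast
          exact zero_mem _
        smul_mem' := fun c x hx => by
          show ((c • x : ↥S) : K) ∈ f n
          have h1 : (c • x : ↥S) = (algebraMap ↥(pClosure k ↥S p) ↥S c) * x :=
            Algebra.smul_def c x
          have h2 : algebraMap ↥(pClosure k ↥S p) ↥S c = (c : ↥S) := rfl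
          rw [h1, h2]
          push_cast
          exact mul_mem (hFle n (hEF c)) hx }
    have hVmem : ∀ n (x : ↥S), x ∈ V n ↔ (x : K) ∈ f n := fun n x => Iff.rfl
    haveI : IsArtinian ↥(pClosure k ↥S p) ↥S := isArtinian_of_fg_of_artinian'
    obtain ⟨N, hN⟩ := IsArtinian.monotone_stabilizes
      (⟨fun n => OrderDual.toDual (V n),
        fun a b hab => OrderDual.toDual_le_toDual.mpr (fun x hx => hanti hab hx)⟩ :
        ℕ →o (Submodule ↥(pClosure k ↥S p) ↥S)ᵒᵈ)
    have hVN : ∀ m, N ≤ m → V N = V m := fun m hm => OrderDual.toDual.injective (hN m hm)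
    -- downward induction on exponents
    have key : ∀ m : ℕ, ∀ x : K, x ∈ f N → x ^ p ^ m ∈ F → x ∈ F := by
      intro m
      induction m with
      | zero => intro x _ h; simpa using h
      | succ m ih =>
        intro x hx h
        have hyS : x ^ p ^ m ∈ S := by
          apply (hSmem _).mpr
          rw [← pow_mul, ← pow_succ]
          exact h
        have hyf : ∀ n, x ^ p ^ m ∈ f n := by
          intro n
          rcases le_or_gt N n with h' | h'
          · have hyN : (⟨x ^ p ^ m, hyS⟩ : ↥S) ∈ V N := pow_mem hx (p ^ m)
            rw [hVN n h'] at hyN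
            exact hyN
          · exact hanti h'.le (pow_mem hx (p ^ m))
        exact ih x hx (hmemF _ hyf)
    refine ⟨N, fun n hn => le_antisymm (hanti hn) ?_⟩
    refine le_trans (fun x hx => ?_) (hFle n)
    obtain ⟨m, hm⟩ := IsPurelyInseparable.pow_mem k p (x : K)
    obtain ⟨c, hc⟩ := hm
    exact key m x hx (by rw [← hc]; exact F.algebraMap_mem c)
  · -- (2) → (1) : via an infinite p-independent set
    intro hyp2 L
    by_contra hnfd
    haveI : CharP ↥L p := charP_of_injective_algebraMap (algebraMap k ↥L).injective p
    have hpow : ∀ x : ↥L, x ^ p ∈ (algebraMap ↥(pClosure k ↥L p) ↥L).range := by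
      intro x
      have hx : x ^ p ∈ pClosure k ↥L p := subset_adjoin k _ ⟨x, rfl⟩
      exact ⟨⟨x ^ p, hx⟩, rfl⟩
    obtain ⟨B, hBinf, hBind⟩ := exists_indep_set hpow hnfd
    let g : ℕ → ↥L := fun n => ((Set.Infinite.natEmbedding B hBinf) n : ↥L)
    have hgB : ∀ n, g n ∈ B := fun n => ((Set.Infinite.natEmbedding B hBinf) n).2
    have hginj : Function.Injective g := fun a b hab =>
      (Set.Infinite.natEmbedding B hBinf).injective (Subtype.ext hab)
    let D : ℕ → IntermediateField k K := fun n =>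
      adjoin k (L.val '' ({x : ↥L | ∃ y : ↥L, y ^ p = x} ∪ (B \ g '' Set.Iio n)))
    have hDanti : ∀ n, D (n + 1) ≤ D n := by
      intro n
      apply IntermediateField.adjoin.mono
      apply Set.image_mono
      apply Set.union_subset_union_right
      apply Set.diff_subset_diff_right
      exact Set.image_mono (fun j hj => lt_of_lt_of_le hj (Nat.le_succ n))
    obtain ⟨n₀, hn₀⟩ := hyp2 D hDanti
    have hg0 : g n₀ ∈ B \ g '' Set.Iio n₀ := by
      refine ⟨hgB n₀, ?_⟩
      rintro ⟨j, hj, hje⟩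
      exact absurd (hginj hje) (Nat.ne_of_lt hj)
    have hmem1 : L.val (g n₀) ∈ D n₀ :=
      subset_adjoin _ _ ⟨g n₀, Or.inr hg0, rfl⟩
    have hmem2 : L.val (g n₀) ∈ D (n₀ + 1) := by
      rw [hn₀ (n₀ + 1) (Nat.le_succ n₀)]
      exact hmem1
    have hmap : D (n₀ + 1) =
        (adjoin k ({x : ↥L | ∃ y : ↥L, y ^ p = x} ∪ (B \ g '' Set.Iio (n₀ + 1)))).map L.val :=
      (IntermediateField.adjoin_map k _ L.val).symm
    rw [hmap] at hmem2
    have hmem3 : L.val (g n₀) ∈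
        (⇑L.val '' ↑(adjoin k ({x : ↥L | ∃ y : ↥L, y ^ p = x} ∪ (B \ g '' Set.Iio (n₀ + 1))))) := by
      rw [← IntermediateField.coe_map]
      exact hmem2
    obtain ⟨y, hy, hyx⟩ := hmem3
    have hyg : y = g n₀ := Subtype.val_injective hyx
    rw [hyg] at hy
    have hy' : g n₀ ∈ adjoin k ({x : ↥L | ∃ y : ↥L, y ^ p = x} ∪ (B \ g '' Set.Iio (n₀ + 1))) := hy
    have h2 : g n₀ ∈ adjoin (↥(pClosure k ↥L p)) (B \ g '' Set.Iio (n₀ + 1)) := by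
      rw [← IntermediateField.adjoin_adjoin_left k {x : ↥L | ∃ y : ↥L, y ^ p = x}
        (B \ g '' Set.Iio (n₀ + 1))] at hy'
      exact hy'
    have h3 : g n₀ ∈ adjoin (↥(pClosure k ↥L p)) (B \ {g n₀}) := by
      refine (IntermediateField.adjoin.mono _ _ _ ?_) h2
      apply Set.diff_subset_diff_right
      intro z hz
      rw [Set.mem_singleton_iff] at hz
      subst hz
      exact ⟨n₀, by simp, rfl⟩
    exact hBind (g n₀) (hgB n₀) h3
end

section
/- Let K/k be an lq-finite purely inseparable extension of characteristic p > 0 of unbounded exponent. Then the set of intermediate fields L of K/k with L/k of unbounded exponent, ordered by reverse inclusion, is inductive (every chain has an upper bound); consequently K/k admits a minimal subextension M/k of unbounded exponent, and this M/k is relatively perfect. -/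
/-!
Common definitions: purely inseparable extension theory (r-bases, degree of
irrationality, relative perfect closure, modularity), following Fliouet,
"Extensions absolument lq-finies".
-/

open IntermediateField

section Aux

variable {p : ℕ} [Fact p.Prime] {k K : Type*} [Field k] [Field K] [Algebra k K] [CharP k p]

omit [Fact (Nat.Prime p)] [CharP k p] in
theorem aux_pow_range_mono [IsPurelyInseparable k K] {x : K} {m e : ℕ}
    (h : x ^ p ^ m ∈ (algebraMap k K).range) (hme : m ≤ e) :
    x ^ p ^ e ∈ (algebraMap k K).range := by
  have : x ^ p ^ e = (x ^ p ^ m) ^ p ^ (e - m) := by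
    rw [← pow_mul, ← pow_add, Nat.add_sub_cancel' hme]
  rw [this]
  exact pow_mem h _

/-- From an element of `L` of exponent `> e` over `k`, produce an element of
`L ⊓ (k^{p^{-(e+1)}} ∩ K)` of exponent `> e` over `k`. -/
theorem aux_key [IsPurelyInseparable k K] (L : IntermediateField k K) (e : ℕ)
    (h : ∃ x ∈ L, x ^ p ^ e ∉ (algebraMap k K).range) :
    ∃ y, y ∈ L ⊓ expleq k K p (e + 1) ∧ y ^ p ^ e ∉ (algebraMap k K).range := by
  haveI : ExpChar k p := ExpChar.prime Fact.out
  obtain ⟨x, hxL, hxe⟩ := h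
  obtain ⟨n, hn⟩ := IsPurelyInseparable.pow_mem k p (E := K) (x := x)
  set S := {m : ℕ | x ^ p ^ m ∈ (algebraMap k K).range} with hS
  have hSne : S.Nonempty := ⟨n, hn⟩
  set m := sInf S with hm
  have hmS : m ∈ S := Nat.sInf_mem hSne
  have hem : e < m := by
    by_contra hcon
    push_neg at hcon
    exact hxe (aux_pow_range_mono hmS hcon)
  refine ⟨x ^ p ^ (m - (e + 1)), ⟨pow_mem hxL _, ?_⟩, ?_⟩
  · apply IntermediateField.subset_adjoin
    show (x ^ p ^ (m - (e + 1))) ^ p ^ (e + 1) ∈ (algebraMap k K).range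
    rw [← pow_mul, ← pow_add, Nat.sub_add_cancel hem]
    exact hmS
  · rw [← pow_mul, ← pow_add]
    intro hmem
    have h1 : m - (e + 1) + e ∈ S := hmem
    have h2 : m ≤ m - (e + 1) + e := Nat.sInf_le h1
    omega

end Aux

/-- For an `lq`-finite purely inseparable extension of unbounded
exponent, the set of intermediate fields of unbounded exponent over `k`, ordered by
reverse inclusion, is inductive; hence there is a minimal such field, and it is
relatively perfect over `k`. -/
theorem lqFinite_unbounded_inductive_minimal_relPerfect
    (p : ℕ) [Fact p.Prime] (k K : Type*) [Field k] [Field K] [Algebra k K] [CharP k p]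
    [IsPurelyInseparable k K]
    (hlq : ∀ n : ℕ, FiniteDimensional k ↥(expleq k K p n))
    (hub : UnboundedExp k K p) :
    (∀ C : Set (IntermediateField k K),
        C ⊆ {L | ∀ e : ℕ, ∃ x ∈ L, x ^ p ^ e ∉ (algebraMap k K).range} →
        IsChain (· ≤ ·) C →
        ∃ M : IntermediateField k K,
          (∀ e : ℕ, ∃ x ∈ M, x ^ p ^ e ∉ (algebraMap k K).range) ∧
          ∀ L ∈ C, M ≤ L) ∧
      ∃ M : IntermediateField k K,
        Minimal (fun L : IntermediateField k K =>
          ∀ e : ℕ, ∃ x ∈ L, x ^ p ^ e ∉ (algebraMap k K).range) M ∧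
        pClosureOf p M = M := by
  classical
  have key := fun (L : IntermediateField k K) (e : ℕ) => aux_key (p := p) L e
  have part1 : ∀ C : Set (IntermediateField k K),
      C ⊆ {L | ∀ e : ℕ, ∃ x ∈ L, x ^ p ^ e ∉ (algebraMap k K).range} →
      IsChain (· ≤ ·) C →
      ∃ M : IntermediateField k K,
        (∀ e : ℕ, ∃ x ∈ M, x ^ p ^ e ∉ (algebraMap k K).range) ∧
        ∀ L ∈ C, M ≤ L := by
    intro C hC hchain
    rcases C.eq_empty_or_nonempty with rfl | ⟨L1, hL1⟩
    · exact ⟨⊤, fun e => by obtain ⟨x, hx⟩ := hub e; exact ⟨x, trivial, hx⟩,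
        fun L h => h.elim⟩
    refine ⟨sInf C, ?_, fun L hL => sInf_le hL⟩
    intro e
    haveI hE : FiniteDimensional k ↥(expleq k K p (e + 1)) := hlq (e + 1)
    set E := expleq k K p (e + 1) with hEdef
    have hfin : ∀ L : IntermediateField k K, FiniteDimensional k ↥(L ⊓ E) := by
      intro L
      haveI : FiniteDimensional k ↥(Subalgebra.toSubmodule E.toSubalgebra) := hE
      have h1 : Subalgebra.toSubmodule (L ⊓ E).toSubalgebra ≤
          Subalgebra.toSubmodule E.toSubalgebra := fun x hx => hx.2
      exact Submodule.finiteDimensional_of_le h1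
    set S := {n : ℕ | ∃ L ∈ C, Module.finrank k ↥(L ⊓ E) = n} with hSdef
    have hSne : S.Nonempty := ⟨_, L1, hL1, rfl⟩
    obtain ⟨L0, hL0C, hL0r⟩ := Nat.sInf_mem hSne
    have hmin : ∀ L ∈ C, L0 ⊓ E ≤ L := by
      intro L hLC
      rcases eq_or_ne L L0 with rfl | hne
      · exact inf_le_left
      rcases hchain hLC hL0C hne with h | h
      · have hle : L ⊓ E ≤ L0 ⊓ E := inf_le_inf_right E h
        haveI := hfin L0
        have heq : L ⊓ E = L0 ⊓ E := by
          apply IntermediateField.eq_of_le_of_finrank_le hle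
          rw [hL0r]
          exact Nat.sInf_le ⟨L, hLC, rfl⟩
        exact heq.symm.le.trans inf_le_left
      · exact inf_le_left.trans h
    obtain ⟨y, hyLE, hye⟩ := key L0 e (hC hL0C e)
    refine ⟨y, ?_, hye⟩
    have : y ∈ (↑(sInf C) : Set K) := by
      rw [IntermediateField.coe_sInf]
      intro t ht
      obtain ⟨L, rfl⟩ := ht
      exact Set.mem_iInter.2 fun hL => hmin L hL hyLE
    exact this
  refine ⟨part1, ?_⟩
  obtain ⟨M, hM⟩ := (@zorn_le₀ (IntermediateField k K)ᵒᵈ _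
    {L | ∀ e : ℕ, ∃ x ∈ OrderDual.ofDual L, x ^ p ^ e ∉ (algebraMap k K).range})
    (fun c cS hc => by
      obtain ⟨M, hM1, hM2⟩ := part1 (OrderDual.ofDual '' c)
        (fun L hL => by obtain ⟨L', hL', rfl⟩ := hL; exact cS hL')
        (by
          rintro x ⟨x', hx', rfl⟩ y ⟨y', hy', rfl⟩ hne
          rcases hc hx' hy' (fun h => hne (congrArg _ h)) with h | h
          · exact Or.inr h
          · exact Or.inl h)
      exact ⟨OrderDual.toDual M, hM1, fun z hz => hM2 _ ⟨z, hz, rfl⟩⟩)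
  refine ⟨OrderDual.ofDual M, ⟨hM.1, fun L hL hLM => hM.2 hL hLM⟩, ?_⟩
  -- relative perfection
  have hMprop : ∀ e : ℕ, ∃ x ∈ OrderDual.ofDual M, x ^ p ^ e ∉ (algebraMap k K).range := hM.1
  set M' : IntermediateField k K := OrderDual.ofDual M with hM'
  have hle : pClosureOf p M' ≤ M' := by
    apply IntermediateField.adjoin_le_iff.2
    rintro x ⟨y, hy, rfl⟩
    exact pow_mem hy p
  have hprop : ∀ e : ℕ, ∃ x ∈ pClosureOf p M', x ^ p ^ e ∉ (algebraMap k K).range := by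
    intro e
    obtain ⟨x, hx, hxe⟩ := hMprop (e + 1)
    refine ⟨x ^ p, IntermediateField.subset_adjoin _ _ ⟨x, hx, rfl⟩, ?_⟩
    rw [← pow_mul, ← pow_succ']
    exact hxe
  have h2 : M' ≤ pClosureOf p M' := hM.2 hprop hle
  exact le_antisymm hle h2
end

section
/- Let K/k be an lq-finite purely inseparable extension of characteristic p > 0 of unbounded exponent. Then the relative perfect closure rp(K/k) is of unbounded exponent over k; in particular rp(K/k) ≠ k. -/
/-!
Common definitions: purely inseparable extension theory (r-bases, degree of
irrationality, relative perfect closure, modularity), following Fliouet,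
"Extensions absolument lq-finies".
-/

open IntermediateField

theorem zornMin {α : Type*} [PartialOrder α] (s : Set α)
    (ih : ∀ c ⊆ s, IsChain (· ≤ ·) c → ∃ lb ∈ s, ∀ z ∈ c, lb ≤ z) :
    ∃ m ∈ s, ∀ z ∈ s, z ≤ m → z = m := by
  have hz : ∀ c ⊆ (OrderDual.ofDual ⁻¹' s : Set αᵒᵈ), IsChain (· ≤ ·) c →
      ∃ ub ∈ (OrderDual.ofDual ⁻¹' s : Set αᵒᵈ), ∀ z ∈ c, z ≤ ub := by
    intro c hcs hc
    obtain ⟨lb, hlbs, hlb⟩ := ih (OrderDual.ofDual '' c)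
      (by rintro _ ⟨x, hx, rfl⟩; exact hcs hx)
      (by rintro _ ⟨x, hx, rfl⟩ _ ⟨y, hy, rfl⟩ hne
          exact (hc hx hy (fun h => hne (congrArg _ h))).symm)
    exact ⟨OrderDual.toDual lb, hlbs, fun z hz => hlb _ ⟨z, hz, rfl⟩⟩
  obtain ⟨m, hm⟩ := zorn_le₀ (α := αᵒᵈ) (OrderDual.ofDual ⁻¹' s) hz
  refine ⟨OrderDual.ofDual m, hm.1, fun z hz hzm => ?_⟩
  exact le_antisymm hzm (hm.2 hz hzm)

/-- From an element of exponent `> e`, produce an element (a `p`-power of it) of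
exponent exactly `e+1`. -/
theorem exact_exp {p : ℕ} (_hp : 1 ≤ p) {k K : Type*} [Field k] [Field K] [Algebra k K]
    [ExpChar k p] [IsPurelyInseparable k K] {x : K} {e : ℕ}
    (hx : x ^ p ^ e ∉ (algebraMap k K).range) :
    ∃ j : ℕ, (x ^ p ^ j) ^ p ^ (e + 1) ∈ (algebraMap k K).range ∧
      (x ^ p ^ j) ^ p ^ e ∉ (algebraMap k K).range := by
  have hpow : ∀ a b : ℕ, (x ^ p ^ a) ^ p ^ b = x ^ p ^ (a + b) := by
    intro a b; rw [← pow_mul, ← pow_add]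
  set S : Set ℕ := {n | x ^ p ^ n ∈ (algebraMap k K).range} with hSdef
  have hne : S.Nonempty := IsPurelyInseparable.pow_mem k p x
  set m := sInf S with hm
  have hmS : m ∈ S := Nat.sInf_mem hne
  have hem : e + 1 ≤ m := by
    by_contra h
    push_neg at h
    apply hx
    have hme : e = m + (e - m) := by omega
    have : x ^ p ^ e = (x ^ p ^ m) ^ p ^ (e - m) := by rw [hpow, ← hme]
    rw [this]
    obtain ⟨c, hc⟩ := hmS
    exact ⟨c ^ p ^ (e - m), by rw [map_pow, hc]⟩
  refine ⟨m - (e + 1), ?_, ?_⟩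
  · rw [hpow]
    have : m - (e + 1) + (e + 1) = m := by omega
    rw [this]; exact hmS
  · rw [hpow]
    have h1 : m - (e + 1) + e = m - 1 := by omega
    rw [h1]
    exact Nat.notMem_of_lt_sInf (show m - 1 < sInf S from by rw [← hm]; omega)

/-- For an `lq`-finite purely inseparable extension of unbounded
exponent, the relative perfect closure `rp(K/k)` has unbounded exponent over `k`;
in particular `rp(K/k) ≠ k`. -/
theorem rp_unboundedExp_of_lqFinite
    (p : ℕ) [Fact p.Prime] (k K : Type*) [Field k] [Field K] [Algebra k K] [CharP k p]
    [IsPurelyInseparable k K]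
    (hlq : ∀ n : ℕ, FiniteDimensional k ↥(expleq k K p n))
    (hub : UnboundedExp k K p) :
    (∀ e : ℕ, ∃ x ∈ rp k K p, x ^ p ^ e ∉ (algebraMap k K).range) ∧
      rp k K p ≠ ⊥ := by
  haveI hek : ExpChar k p := ExpChar.prime Fact.out
  have hp1 : 1 ≤ p := (Fact.out : p.Prime).one_lt.le
  set S : Set (IntermediateField k K) :=
    {L | ∀ e : ℕ, ∃ x ∈ L, x ^ p ^ e ∉ (algebraMap k K).range} with hSdef
  have htop : ⊤ ∈ S := fun e => by
    obtain ⟨x, hx⟩ := hub e; exact ⟨x, trivial, hx⟩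
  -- every element of a field in S has, for each e, a companion of exponent exactly e+1
  have hexact : ∀ L ∈ S, ∀ e : ℕ, ∃ y ∈ L, y ^ p ^ (e + 1) ∈ (algebraMap k K).range ∧
      y ^ p ^ e ∉ (algebraMap k K).range := by
    intro L hL e
    obtain ⟨x, hxL, hx⟩ := hL e
    obtain ⟨j, h1, h2⟩ := exact_exp hp1 hx
    exact ⟨x ^ p ^ j, pow_mem hxL _, h1, h2⟩
  -- chains in S have lower bounds in S
  have hchain : ∀ c ⊆ S, IsChain (· ≤ ·) c → ∃ lb ∈ S, ∀ z ∈ c, lb ≤ z := by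
    intro c hcS hc
    rcases c.eq_empty_or_nonempty with rfl | hcne
    · exact ⟨⊤, htop, fun z hz => absurd hz (Set.notMem_empty z)⟩
    refine ⟨sInf c, ?_, fun z hz => sInf_le hz⟩
    intro e
    haveI := hlq (e + 1)
    set V : IntermediateField k K → Submodule k ↥(expleq k K p (e + 1)) := fun L =>
      Submodule.comap (expleq k K p (e + 1)).val.toLinearMap
        (Subalgebra.toSubmodule L.toSubalgebra) with hVdef
    have hVmem : ∀ (L : IntermediateField k K) (x : ↥(expleq k K p (e + 1))),
        x ∈ V L ↔ (x : K) ∈ L := by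
      intro L x
      simp [hVdef, Submodule.mem_comap]
    have hVmono : ∀ L L' : IntermediateField k K, L ≤ L' → V L ≤ V L' := by
      intro L L' h x hx
      rw [hVmem] at hx ⊢
      exact h hx
    -- choose a member of the chain with minimal V-finrank
    set N : Set ℕ := {n | ∃ L ∈ c, Module.finrank k (V L) = n} with hNdef
    have hNne : N.Nonempty := by
      obtain ⟨L, hL⟩ := hcne
      exact ⟨Module.finrank k (V L), L, hL, rfl⟩
    obtain ⟨L₀, hL₀c, hL₀rank⟩ := Nat.sInf_mem hNne
    have hmin : ∀ L ∈ c, V L₀ ≤ V L := by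
      intro L hLc
      rcases eq_or_ne L L₀ with rfl | hne
      · exact le_rfl
      rcases hc.total hL₀c hLc with h | h
      · exact hVmono _ _ h
      · have hle : V L ≤ V L₀ := hVmono _ _ h
        have hrk : Module.finrank k (V L₀) ≤ Module.finrank k (V L) := by
          rw [hL₀rank]
          exact Nat.sInf_le ⟨L, hLc, rfl⟩
        rw [Submodule.eq_of_le_of_finrank_le hle hrk]
    -- the witness
    obtain ⟨y, hyL₀, hy1, hy2⟩ := hexact L₀ (hcS hL₀c) e
    have hyE : y ∈ expleq k K p (e + 1) := subset_adjoin _ _ hy1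
    have hyall : ∀ L ∈ c, y ∈ L := by
      intro L hLc
      have : (⟨y, hyE⟩ : ↥(expleq k K p (e + 1))) ∈ V L₀ := (hVmem _ _).mpr hyL₀
      exact (hVmem _ _).mp (hmin L hLc this)
    have hyInf : y ∈ sInf c := by
      rw [← SetLike.mem_coe, IntermediateField.coe_sInf, Set.mem_iInter₂]
      intro L hLc
      exact hyall L hLc
    exact ⟨y, hyInf, hy2⟩
  -- minimal element of S
  obtain ⟨M, hMS, hMmin⟩ := zornMin S hchain
  -- M is relatively perfect
  have h1 : pClosureOf p M ≤ M := by
    rw [pClosureOf, adjoin_le_iff]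
    rintro _ ⟨y, hy, rfl⟩
    exact pow_mem hy p
  have h2 : pClosureOf p M ∈ S := by
    intro e
    obtain ⟨x, hxM, hx⟩ := hMS (e + 1)
    refine ⟨x ^ p, subset_adjoin _ _ ⟨x, hxM, rfl⟩, ?_⟩
    rwa [← pow_mul, ← pow_succ']
  have hMeq : pClosureOf p M = M := hMmin _ h2 h1
  have hMrp : M ≤ rp k K p := le_sSup hMeq
  refine ⟨fun e => ?_, ?_⟩
  · obtain ⟨x, hxM, hx⟩ := hMS e
    exact ⟨x, hMrp hxM, hx⟩
  · intro hbot
    obtain ⟨x, hxM, hx⟩ := hMS 0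
    have : x ∈ rp k K p := hMrp hxM
    rw [hbot, IntermediateField.mem_bot] at this
    obtain ⟨c, hc⟩ := this
    exact hx ⟨c, by simpa [pow_zero, pow_one] using hc⟩
end
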